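/- Let D be a type with a binary relation ~ (the neighboring relation) and let Ms : List (D → PMF A) be a finite list of mechanisms such that the i-th mechanism satisfies (εᵢ, δᵢ)-differential privacy with respect to ~, where all εᵢ, δᵢ ≥ 0. Define the joint mechanism J recursively by J([]) d = PMF.pure [] and J(M :: Ms') d = (M d).bind (fun a => (J Ms' d).map (List.cons a)). Then J(Ms) satisfies (Σᵢ εᵢ, Σᵢ δᵢ)-differential privacy: for all d₁ ~ d₂ and every set S of lists over A, Pr[J(Ms)(d₁) ∈ S] ≤ e^{Σᵢ εᵢ} · Pr[J(Ms)(d₂) ∈ S] + Σᵢ δᵢ. -/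

import Mathlib

open ENNReal

/-- The joint mechanism that runs a list of mechanisms independently on the
same database and releases the list of their outputs. -/
noncomputable def jointMech {D A : Type*} : List (D → PMF A) → D → PMF (List A)
  | [], _ => PMF.pure []
  | M :: Ms', d => (M d).bind (fun a => (jointMech Ms' d).map (List.cons a))

lemma PMF.toOuterMeasure_apply_le_one' {α : Type*} (p : PMF α) (s : Set α) :
    p.toOuterMeasure s ≤ 1 := by
  rw [PMF.toOuterMeasure_apply]
  calc ∑' a, s.indicator p a ≤ ∑' a, p a :=
        ENNReal.summable.tsum_le_tsum (fun a => Set.indicator_le_self _ _ a) ENNReal.summable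
    _ = 1 := p.tsum_coe

/-- Expectation version of approximate DP: a set bound implies a bound on
expectations of `[0,1]`-valued functions. -/
lemma expDP {A : Type*} (μ₁ μ₂ : PMF A) (e δ : ℝ≥0∞) (he : e ≠ ∞)
    (h : ∀ S : Set A, μ₁.toOuterMeasure S ≤ e * μ₂.toOuterMeasure S + δ)
    (g : A → ℝ≥0∞) (hg : ∀ a, g a ≤ 1) :
    ∑' a, μ₁ a * g a ≤ e * ∑' a, μ₂ a * g a + δ := by
  have key : ∀ a, μ₁ a * g a ≤ e * μ₂ a * g a + (μ₁ a - e * μ₂ a) := by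
    intro a
    rcases le_total (μ₁ a) (e * μ₂ a) with hle | hle
    · exact le_add_right (mul_le_mul_left hle _)
    · calc μ₁ a * g a = (e * μ₂ a + (μ₁ a - e * μ₂ a)) * g a := by
            rw [add_tsub_cancel_of_le hle]
        _ = e * μ₂ a * g a + (μ₁ a - e * μ₂ a) * g a := by rw [add_mul]
        _ ≤ e * μ₂ a * g a + (μ₁ a - e * μ₂ a) * 1 :=
            add_le_add_right (mul_le_mul_right (hg a) _) _
        _ = e * μ₂ a * g a + (μ₁ a - e * μ₂ a) := by rw [mul_one]
  have hsub : ∑' a, (μ₁ a - e * μ₂ a) ≤ δ := by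
    set T : Set A := {a | e * μ₂ a < μ₁ a} with hT
    have heq : ∀ a, μ₁ a - e * μ₂ a =
        T.indicator μ₁ a - T.indicator (fun a => e * μ₂ a) a := by
      intro a
      by_cases ha : a ∈ T
      · simp [Set.indicator_of_mem ha]
      · have : μ₁ a ≤ e * μ₂ a := not_lt.mp ha
        simp [Set.indicator_of_notMem ha, tsub_eq_zero_of_le this]
    have hle' : ∀ a, T.indicator (fun a => e * μ₂ a) a ≤ T.indicator μ₁ a := by
      intro a
      by_cases ha : a ∈ T
      · simpa [Set.indicator_of_mem ha] using (le_of_lt ha)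
      · simp [Set.indicator_of_notMem ha]
    have hfin : ∑' a, T.indicator (fun a => e * μ₂ a) a ≠ ∞ := by
      refine ne_top_of_le_ne_top ?_ (ENNReal.summable.tsum_le_tsum (fun a => Set.indicator_le_self _ _ a)
        ENNReal.summable)
      rw [ENNReal.tsum_mul_left, PMF.tsum_coe, mul_one]
      exact he
    have hkey : (∑' a, (μ₁ a - e * μ₂ a)) + ∑' a, T.indicator (fun a => e * μ₂ a) a =
        ∑' a, T.indicator μ₁ a := by
      rw [← ENNReal.tsum_add]
      refine tsum_congr fun a => ?_
      by_cases ha : a ∈ T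
      · rw [Set.indicator_of_mem ha, Set.indicator_of_mem ha,
          tsub_add_cancel_of_le (le_of_lt ha)]
      · have h0 : μ₁ a ≤ e * μ₂ a := not_lt.mp ha
        rw [Set.indicator_of_notMem ha, Set.indicator_of_notMem ha,
          tsub_eq_zero_of_le h0, add_zero]
    have hmul : ∑' a, T.indicator (fun a => e * μ₂ a) a = e * μ₂.toOuterMeasure T := by
      rw [PMF.toOuterMeasure_apply, ← ENNReal.tsum_mul_left]
      exact tsum_congr fun a => Set.indicator_const_mul T (μ₂ : A → ℝ≥0∞) e a
    refine ENNReal.le_of_add_le_add_right hfin ?_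
    rw [hkey, ← PMF.toOuterMeasure_apply, hmul, add_comm δ _]
    exact h T
  calc ∑' a, μ₁ a * g a
      ≤ ∑' a, (e * μ₂ a * g a + (μ₁ a - e * μ₂ a)) :=
        ENNReal.summable.tsum_le_tsum key ENNReal.summable
    _ = (∑' a, e * (μ₂ a * g a)) + ∑' a, (μ₁ a - e * μ₂ a) := by
        rw [ENNReal.tsum_add]; congr 1; exact tsum_congr fun a => by ring
    _ ≤ e * ∑' a, μ₂ a * g a + δ := by
        rw [ENNReal.tsum_mul_left]; exact add_le_add_right hsub _

/-- Binary composition step for approximate DP. -/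
lemma stepDP {A B C : Type*} (p₁ p₂ : PMF A) (q₁ q₂ : PMF B) (f : A → B → C)
    (e₁ e₂ δ₁ δ₂ : ℝ≥0∞) (he₁ : e₁ ≠ ∞)
    (hp : ∀ S : Set A, p₁.toOuterMeasure S ≤ e₁ * p₂.toOuterMeasure S + δ₁)
    (hq : ∀ S : Set B, q₁.toOuterMeasure S ≤ e₂ * q₂.toOuterMeasure S + δ₂)
    (S : Set C) :
    ((p₁.bind fun a => q₁.map (f a)).toOuterMeasure S) ≤
      (e₁ * e₂) * ((p₂.bind fun a => q₂.map (f a)).toOuterMeasure S) + (δ₁ + δ₂) := by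
  set g : A → ℝ≥0∞ := fun a => min 1 (e₂ * q₂.toOuterMeasure (f a ⁻¹' S)) with hg
  have hgle : ∀ a, g a ≤ 1 := fun a => min_le_left _ _
  have h1 : ∀ a, q₁.toOuterMeasure (f a ⁻¹' S) ≤ g a + δ₂ := by
    intro a
    rcases le_total 1 (e₂ * q₂.toOuterMeasure (f a ⁻¹' S)) with hc | hc
    · calc q₁.toOuterMeasure (f a ⁻¹' S) ≤ 1 := PMF.toOuterMeasure_apply_le_one' q₁ _
        _ ≤ g a + δ₂ := le_add_right (by simp [hg, hc])
    · calc q₁.toOuterMeasure (f a ⁻¹' S) ≤ e₂ * q₂.toOuterMeasure (f a ⁻¹' S) + δ₂ := hq _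
        _ = g a + δ₂ := by rw [hg]; simp [min_eq_right hc]
  calc (p₁.bind fun a => q₁.map (f a)).toOuterMeasure S
      = ∑' a, p₁ a * q₁.toOuterMeasure (f a ⁻¹' S) := by
        rw [PMF.toOuterMeasure_bind_apply]
        exact tsum_congr fun a => by rw [PMF.toOuterMeasure_map_apply]
    _ ≤ ∑' a, p₁ a * (g a + δ₂) := by
        refine ENNReal.summable.tsum_le_tsum (fun a => mul_le_mul_right (h1 a) _)
          ENNReal.summable
    _ = (∑' a, p₁ a * g a) + δ₂ := by
        simp only [mul_add, ENNReal.tsum_add]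
        rw [ENNReal.tsum_mul_right, PMF.tsum_coe, one_mul]
    _ ≤ (e₁ * ∑' a, p₂ a * g a + δ₁) + δ₂ :=
        add_le_add_left (expDP p₁ p₂ e₁ δ₁ he₁ hp g hgle) _
    _ ≤ (e₁ * ∑' a, p₂ a * (e₂ * q₂.toOuterMeasure (f a ⁻¹' S)) + δ₁) + δ₂ := by
        gcongr with a
        exact min_le_right _ _
    _ = (e₁ * e₂) * ((p₂.bind fun a => q₂.map (f a)).toOuterMeasure S) + (δ₁ + δ₂) := by
        rw [PMF.toOuterMeasure_bind_apply]
        have : ∑' a, p₂ a * (e₂ * q₂.toOuterMeasure (f a ⁻¹' S)) =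
            e₂ * ∑' a, p₂ a * (q₂.map (f a)).toOuterMeasure S := by
          rw [← ENNReal.tsum_mul_left]
          exact tsum_congr fun a => by rw [PMF.toOuterMeasure_map_apply]; ring
        rw [this]; ring

/-- Sequential composition of a finite list of differentially private mechanisms. -/
theorem seq_composition_list
    {D A : Type*} (neighbor : D → D → Prop)
    (Ms : List (D → PMF A)) (εs δs : List ℝ)
    (hlenε : εs.length = Ms.length) (hlenδ : δs.length = Ms.length)
    (hε : ∀ x ∈ εs, 0 ≤ x) (hδ : ∀ x ∈ δs, 0 ≤ x)
    (hDP : ∀ i : Fin Ms.length, ∀ d₁ d₂, neighbor d₁ d₂ → ∀ S : Set A,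
      (Ms[i] d₁).toOuterMeasure S ≤
        ENNReal.ofReal (Real.exp (εs[(i : ℕ)]'(by rw [hlenε]; exact i.isLt))) *
          (Ms[i] d₂).toOuterMeasure S +
        ENNReal.ofReal (δs[(i : ℕ)]'(by rw [hlenδ]; exact i.isLt))) :
    ∀ d₁ d₂, neighbor d₁ d₂ → ∀ S : Set (List A),
      (jointMech Ms d₁).toOuterMeasure S ≤
        ENNReal.ofReal (Real.exp εs.sum) * (jointMech Ms d₂).toOuterMeasure S +
        ENNReal.ofReal δs.sum := by
  induction Ms generalizing εs δs with
  | nil =>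
    intro d₁ d₂ _ S
    rcases List.length_eq_zero_iff.mp hlenε with rfl
    rcases List.length_eq_zero_iff.mp hlenδ with rfl
    simp [jointMech, Real.exp_zero]
  | cons M Ms' ih =>
    intro d₁ d₂ hn S
    rcases εs with _ | ⟨ε, εs'⟩; · simp at hlenε
    rcases δs with _ | ⟨δ, δs'⟩; · simp at hlenδ
    simp only [List.length_cons, Nat.succ.injEq] at hlenε hlenδ
    have hεh : 0 ≤ ε := hε ε (by simp)
    have hδh : 0 ≤ δ := hδ δ (by simp)
    have hεs' : ∀ x ∈ εs', 0 ≤ x := fun x hx => hε x (by simp [hx])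
    have hδs' : ∀ x ∈ δs', 0 ≤ x := fun x hx => hδ x (by simp [hx])
    have ihapp := ih εs' δs' hlenε hlenδ hεs' hδs'
      (fun i d₁ d₂ hn S => by
        have := hDP i.succ d₁ d₂ hn S
        simpa using this) d₁ d₂ hn
    have hhead := hDP ⟨0, by simp⟩ d₁ d₂ hn
    simp only [List.getElem_cons_zero, Fin.val_mk] at hhead
    have key := stepDP (M d₁) (M d₂) (jointMech Ms' d₁) (jointMech Ms' d₂)
      List.cons (ENNReal.ofReal (Real.exp ε)) (ENNReal.ofReal (Real.exp εs'.sum))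
      (ENNReal.ofReal δ) (ENNReal.ofReal δs'.sum) ENNReal.ofReal_ne_top
      hhead ihapp S
    have heq : ENNReal.ofReal (Real.exp ε) * ENNReal.ofReal (Real.exp εs'.sum) =
        ENNReal.ofReal (Real.exp (ε :: εs').sum) := by
      rw [← ENNReal.ofReal_mul (Real.exp_nonneg ε), ← Real.exp_add, List.sum_cons]
    have hδeq : ENNReal.ofReal δ + ENNReal.ofReal δs'.sum =
        ENNReal.ofReal (δ :: δs').sum := by
      rw [List.sum_cons, ENNReal.ofReal_add hδh (List.sum_nonneg hδs')]
    rw [heq, hδeq] at key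
    exact key
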